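/- Let V be a real inner product space, τ > 0, K ≥ 1, E₀ ≥ 0, and let v₀, v₁, …, v_K ∈ V satisfy ‖v₀‖ = 1, the orthogonality ⟨v_{k−1}, v_k − v_{k−1}⟩ = 0 for all k = 1, …, K, and the stability bound τ Σ_{k=1}^{K} ‖(v_k − v_{k−1})/τ‖² ≤ E₀. Then 0 ≤ ‖v_K‖² − 1 ≤ τ E₀. (This is the bound on the violation of the arc-length constraint, | |[u_h^K]'(x_i)|² − 1 | ≤ τ E_{h,ε}[u_h^0], caused by its linearized treatment.) -/

import Mathlib

/-- Bound on the violation of the arc-length constraint due to its linearized treatment: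
if `‖v₀‖ = 1`, the increments are orthogonal to the previous iterate, and the stability
bound `τ Σ_{k<K} ‖(v_{k+1} − v_k)/τ‖² ≤ E₀` holds, then `0 ≤ ‖v K‖² − 1 ≤ τ E₀`. -/
theorem arclength_violation_bound
    {V : Type*} [NormedAddCommGroup V] [InnerProductSpace ℝ V]
    (τ : ℝ) (hτ : 0 < τ) (K : ℕ) (hK : 1 ≤ K) (E₀ : ℝ) (hE₀ : 0 ≤ E₀)
    (v : ℕ → V) (hv0 : ‖v 0‖ = 1)
    (horth : ∀ k < K, (inner ℝ (v k) (v (k + 1) - v k) : ℝ) = 0)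
    (hstab : τ * ∑ k ∈ Finset.range K, ‖(1 / τ) • (v (k + 1) - v k)‖ ^ 2 ≤ E₀) :
    0 ≤ ‖v K‖ ^ 2 - 1 ∧ ‖v K‖ ^ 2 - 1 ≤ τ * E₀ := by
  have key : ∀ n ≤ K, ‖v n‖ ^ 2 =
      1 + ∑ k ∈ Finset.range n, ‖v (k + 1) - v k‖ ^ 2 := by
    intro n hn
    induction n with
    | zero => simp [hv0]
    | succ m ih =>
      have hm : m ≤ K := Nat.le_of_succ_le hn
      have hmK : m < K := Nat.lt_of_succ_le hn
      have horth' := horth m hmK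
      have hpyth : ‖v (m + 1)‖ ^ 2 = ‖v m‖ ^ 2 + ‖v (m + 1) - v m‖ ^ 2 := by
        have h := norm_add_sq_real (v m) (v (m + 1) - v m)
        rw [horth'] at h
        simpa using h
      rw [hpyth, ih hm, Finset.sum_range_succ]
      ring
  have hsum : ‖v K‖ ^ 2 - 1 = ∑ k ∈ Finset.range K, ‖v (k + 1) - v k‖ ^ 2 := by
    rw [key K le_rfl]; ring
  have hnonneg : (0:ℝ) ≤ ∑ k ∈ Finset.range K, ‖v (k + 1) - v k‖ ^ 2 :=
    Finset.sum_nonneg fun k _ => by positivity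
  constructor
  · rw [hsum]; exact hnonneg
  · rw [hsum]
    have hrw : ∑ k ∈ Finset.range K, ‖v (k + 1) - v k‖ ^ 2 =
        τ * (τ * ∑ k ∈ Finset.range K, ‖(1 / τ) • (v (k + 1) - v k)‖ ^ 2) := by
      rw [Finset.mul_sum, Finset.mul_sum]
      refine Finset.sum_congr rfl fun k _ => ?_
      rw [norm_smul]
      simp only [norm_div, norm_one, Real.norm_eq_abs, abs_of_pos hτ]
      field_simp
    rw [hrw]
    exact mul_le_mul_of_nonneg_left hstab hτ.le
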